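/- Let m,n be relatively prime integers with n > 0 and 0 ≤ m ≤ n, and let F : ℤ² → [0,∞) satisfy Σ_{λ∈ℤ²} F(λ)(|λ|+1) < ∞. Then the limit over positive integers R of (1/R) · Σ_{x₁=0}^{Rn−1} Σ_{x₂=0}^{Rn−1} Σ_{y₁∈ℤ, y₁ > (m/n)x₁} Σ_{y₂∈ℤ, y₂ ≤ (m/n)x₂} F(x₁−x₂, y₁−y₂) exists and equals √(n²+m²) · Σ_{(x,y)∈ℤ², y > (m/n)x} dist((x,y), G) · F(x,y), where G = {(t,(m/n)t) : t ∈ ℝ} is the graph of H(x) = (m/n)x and dist is the Euclidean distance from a point to this line. -/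

import Mathlib

open Filter Topology

noncomputable section

/-- Euclidean distance from the point `p ∈ ℤ²` to the line `G = {(t,(m/n)t) : t ∈ ℝ}`. -/
def distToGraph (m n : ℕ) (p : ℤ × ℤ) : ℝ :=
  sInf (Set.range fun t : ℝ =>
    Real.sqrt (((p.1 : ℝ) - t) ^ 2 + ((p.2 : ℝ) - (m : ℝ) / n * t) ^ 2))

def Aq (m n : ℕ) (z : ℤ) : ℤ := (m * z) / n
def Pp (m n : ℕ) (a b : ℤ) : ℤ :=
  ∑ x ∈ Finset.range n, max 0 (b + Aq m n x - Aq m n (x + a))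
def Np (m n R : ℕ) (a b : ℤ) : ℤ :=
  ∑ x ∈ Finset.range (R*n),
    if 0 ≤ (x:ℤ) + a ∧ (x:ℤ) + a < (R*n : ℕ) then max 0 (b + Aq m n x - Aq m n (x + a)) else 0

section Lemmas
variable {m n : ℕ} {F : ℤ × ℤ → ℝ}


lemma floorA (z : ℤ) : ⌊(m:ℝ)/n * (z:ℝ)⌋ = Aq m n z := by
  have h : (m:ℝ)/n * (z:ℝ) = (((m * z : ℤ) / (n : ℕ) : ℚ) : ℝ) := by
    push_cast; ring
  rw [h, Rat.floor_cast, Rat.floor_intCast_div_natCast]; rfl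

lemma A_add_mul (hn : 0 < n) (z k : ℤ) : Aq m n (z + k * n) = Aq m n z + k * m := by
  unfold Aq
  have h : (m : ℤ) * (z + k * n) = m * z + (k * m) * n := by ring
  rw [h, Int.add_mul_ediv_right _ _ (by exact_mod_cast hn.ne' : (n:ℤ) ≠ 0)]

lemma A_diff_le (hn : 0 < n) (hmn : m ≤ n) (x y : ℤ) :
    |Aq m n x - Aq m n y| ≤ |x - y| + 1 := by
  have hn' : (0:ℤ) < n := by exact_mod_cast hn
  have hx := Int.mul_ediv_add_emod ((m:ℤ) * x) n
  have hy := Int.mul_ediv_add_emod ((m:ℤ) * y) n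
  have hrx0 : 0 ≤ (m:ℤ) * x % n := Int.emod_nonneg _ hn'.ne'
  have hrxn : (m:ℤ) * x % n < n := Int.emod_lt_of_pos _ hn'
  have hry0 : 0 ≤ (m:ℤ) * y % n := Int.emod_nonneg _ hn'.ne'
  have hryn : (m:ℤ) * y % n < n := Int.emod_lt_of_pos _ hn'
  have hm : (m:ℤ) ≤ n := by exact_mod_cast hmn
  have hm0 : (0:ℤ) ≤ m := by positivity
  have habs : |(m:ℤ) * (x - y)| = m * |x - y| := by rw [abs_mul, abs_of_nonneg hm0]
  have h1 : -((m:ℤ) * |x - y|) ≤ m * (x - y) := by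
    have h := neg_abs_le ((m:ℤ) * (x - y)); rw [habs] at h; exact h
  have h1' : (m:ℤ) * (x - y) ≤ m * |x - y| := by
    have h := le_abs_self ((m:ℤ) * (x - y)); rw [habs] at h; exact h
  have h2 : (m:ℤ) * |x - y| ≤ n * |x - y| := by
    have := abs_nonneg (x - y); nlinarith
  rw [abs_le]
  constructor
  · have key : n * 0 ≤ n * (Aq m n x - Aq m n y + (|x - y| + 1)) := by
      unfold Aq; nlinarith
    have := le_of_mul_le_mul_left key hn'
    linarith
  · have key : n * 0 ≤ n * (|x - y| + 1 - (Aq m n x - Aq m n y)) := by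
      unfold Aq; nlinarith
    have := le_of_mul_le_mul_left key hn'
    linarith

lemma distToGraph_eq (hn : 0 < n) (p : ℤ × ℤ) :
    distToGraph m n p = (|((n:ℤ) * p.2 - m * p.1)| : ℤ) / Real.sqrt ((n:ℝ)^2 + (m:ℝ)^2) := by
  obtain ⟨a, b⟩ := p
  set c : ℝ := (m:ℝ)/n with hc
  have hn' : (0:ℝ) < n := by exact_mod_cast hn
  have hc2 : (0:ℝ) < 1 + c^2 := by positivity
  have hval : distToGraph m n (a, b) = Real.sqrt (((b:ℝ) - c * a)^2 / (1 + c^2)) := by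
    apply IsLeast.csInf_eq
    constructor
    · refine ⟨((a:ℝ) + c * b)/(1 + c^2), ?_⟩
      have harg : ((a:ℝ) - ((a:ℝ) + c * b)/(1 + c^2))^2
          + ((b:ℝ) - c * (((a:ℝ) + c * b)/(1 + c^2)))^2
          = ((b:ℝ) - c * a)^2 / (1 + c^2) := by
        field_simp
        ring
      dsimp only
      rw [← hc, harg]
    · rintro x ⟨t, rfl⟩
      apply Real.sqrt_le_sqrt
      rw [div_le_iff₀ hc2]
      nlinarith [sq_nonneg ((1 + c^2) * t - ((a:ℝ) + c * b))]
  rw [hval]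
  have h2 : ((b:ℝ) - c*a)^2/(1+c^2) = (((n:ℤ)*b - m*a : ℤ):ℝ)^2 / ((n:ℝ)^2+(m:ℝ)^2) := by
    rw [hc]; push_cast; field_simp
  rw [h2, Real.sqrt_div (sq_nonneg _), Real.sqrt_sq_eq_abs, Int.cast_abs]

lemma step1' (hn : 0 < n) (a b x : ℤ) :
    b + Aq m n x - Aq m n (x + a) = b - (((m:ℤ)*x % n + m*a)/n) := by
  have hn' : (n:ℤ) ≠ 0 := by exact_mod_cast hn.ne'
  have hmod := Int.mul_ediv_add_emod ((m:ℤ)*x) n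
  have h : (m:ℤ)*(x+a) = ((m:ℤ)*x % n + m*a) + ((m*x)/n) * n := by ring_nf; linarith
  have h2 : Aq m n (x+a) = ((m:ℤ)*x % n + m*a)/n + Aq m n x := by
    unfold Aq
    rw [h, Int.add_mul_ediv_right _ _ hn']
  rw [h2]; ring

lemma step2' (hn : 0 < n) (hcop : Nat.Coprime m n) {M : Type*} [AddCommMonoid M] (f : ℕ → M) :
    ∑ x ∈ Finset.range n, f ((m*x) % n) = ∑ r ∈ Finset.range n, f r := by
  apply Finset.sum_bij (fun x _ => (m*x) % n)
  · intro x hx; exact Finset.mem_range.2 (Nat.mod_lt _ hn)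
  · intro x hx y hy hxy
    have h1 : m * x ≡ m * y [MOD n] := by
      unfold Nat.ModEq; exact hxy
    have h2 : x ≡ y [MOD n] := Nat.ModEq.cancel_left_of_coprime (hcop.symm) h1
    have := Nat.mod_eq_of_lt (Finset.mem_range.1 hx)
    have := Nat.mod_eq_of_lt (Finset.mem_range.1 hy)
    unfold Nat.ModEq at h2; omega
  · intro r hr
    have := Finset.surj_on_of_inj_on_of_card_le (s := Finset.range n) (t := Finset.range n)
      (fun x _ => (m*x) % n)
      (fun x hx => Finset.mem_range.2 (Nat.mod_lt _ hn))
      (fun x y hx hy hxy => by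
        have h1 : m * x ≡ m * y [MOD n] := hxy
        have h2 : x ≡ y [MOD n] := Nat.ModEq.cancel_left_of_coprime (hcop.symm) h1
        have := Nat.mod_eq_of_lt (Finset.mem_range.1 hx)
        have := Nat.mod_eq_of_lt (Finset.mem_range.1 hy)
        unfold Nat.ModEq at h2; omega)
      le_rfl r hr
    obtain ⟨x, hx, hxr⟩ := this
    exact ⟨x, hx, hxr.symm⟩
  · intro x hx; rfl

lemma step3' (hn : 0 < n) (a b : ℤ) :
    ∑ r ∈ Finset.range n, max 0 (b - (((r:ℤ) + m*a)/n)) = max 0 ((n:ℤ)*b - m*a) := by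
  have hn' : (0:ℤ) < n := by exact_mod_cast hn
  set q : ℤ := ((m:ℤ)*a)/n with hq
  set s : ℤ := ((m:ℤ)*a) % n with hs
  have hma : (n:ℤ) * q + s = (m:ℤ)*a := Int.mul_ediv_add_emod _ _
  have hs0 : 0 ≤ s := Int.emod_nonneg _ hn'.ne'
  have hsn : s < n := Int.emod_lt_of_pos _ hn'
  set s' : ℕ := s.toNat with hs'
  have hss' : (s' : ℤ) = s := Int.toNat_of_nonneg hs0
  have hs'n : s' ≤ n := by omega
  set t : ℕ := n - s' with ht
  have htn : t ≤ n := Nat.sub_le _ _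
  have hval : ∀ r ∈ Finset.range n, max 0 (b - (((r:ℤ) + m*a)/n))
      = if r < t then max 0 (b - q) else max 0 (b - q - 1) := by
    intro r hr
    have hrn : r < n := Finset.mem_range.1 hr
    have h1 : ((r:ℤ) + m*a) = ((r:ℤ) + s) + q * n := by linarith
    have h2 : ((r:ℤ) + m*a)/n = ((r:ℤ) + s)/n + q := by
      rw [h1, Int.add_mul_ediv_right _ _ hn'.ne']
    by_cases hcase : r < t
    · have hlt : (r:ℤ) + s < n := by
        have : (r:ℤ) < t := by exact_mod_cast hcase
        omega
      have : ((r:ℤ) + s)/n = 0 := Int.ediv_eq_zero_of_lt (by positivity) hlt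
      rw [if_pos hcase, h2, this]; ring_nf
    · have hge : (n:ℤ) ≤ (r:ℤ) + s := by
        have : (t:ℤ) ≤ r := by exact_mod_cast Nat.le_of_not_lt hcase
        omega
      have hlt2 : (r:ℤ) + s - n < n := by
        have : (r:ℤ) < n := by exact_mod_cast hrn
        omega
      have h3 : ((r:ℤ) + s) = ((r:ℤ) + s - n) + 1 * n := by ring
      have h4 : ((r:ℤ) + s)/n = 1 := by
        rw [h3, Int.add_mul_ediv_right _ _ hn'.ne',
          Int.ediv_eq_zero_of_lt (by omega) hlt2]
        norm_num
      rw [if_neg hcase, h2, h4]; ring_nf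
  rw [Finset.sum_congr rfl hval]
  rw [Finset.sum_ite]
  rw [Finset.sum_const, Finset.sum_const]
  have hfe : Finset.filter (fun r => r < t) (Finset.range n) = Finset.range t := by
    ext r; simp only [Finset.mem_filter, Finset.mem_range]; omega
  have hc1 : (Finset.filter (fun r => r < t) (Finset.range n)).card = t := by
    rw [hfe, Finset.card_range]
  have hc2 : (Finset.filter (fun r => ¬ r < t) (Finset.range n)).card = n - t := by
    have := Finset.card_filter_add_card_filter_not (s := Finset.range n)
      (p := fun r => r < t)
    rw [Finset.card_range] at this
    omega
  rw [hc1, hc2, nsmul_eq_mul, nsmul_eq_mul]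
  have hts : (t:ℤ) = (n:ℤ) - s := by
    rw [ht, Nat.cast_sub hs'n, hss']
  have hnt : ((n - t : ℕ):ℤ) = s := by
    rw [Nat.cast_sub htn, hts]; ring
  rcases le_or_gt b q with h | h
  · rw [max_eq_left (by omega), max_eq_left (by omega), mul_zero, mul_zero, add_zero,
      max_eq_left]
    nlinarith [mul_nonneg hn'.le (sub_nonneg.2 h)]
  · rw [max_eq_right (by omega : (0:ℤ) ≤ b - q), max_eq_right (by omega : (0:ℤ) ≤ b - q - 1),
      max_eq_right]
    · rw [hts, hnt, ← hma]; ring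
    · nlinarith [mul_le_mul_of_nonneg_left (show (1:ℤ) ≤ b - q by omega) hn'.le]
lemma periodP (hn : 0 < n) (hcop : Nat.Coprime m n) (a b : ℤ) :
    Pp m n a b = max 0 ((n:ℤ)*b - m*a) := by
  unfold Pp
  set f : ℕ → ℤ := fun r : ℕ => max 0 (b - (((r:ℤ) + m*a)/n)) with hf
  have h : ∀ x ∈ Finset.range n, max 0 (b + Aq m n x - Aq m n (↑x + a))
      = f ((m*x) % n) := by
    intro x hx
    rw [hf]
    simp only
    rw [step1' hn]
    congr 2
  calc ∑ x ∈ Finset.range n, max 0 (b + Aq m n x - Aq m n (↑x + a))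
      = ∑ x ∈ Finset.range n, f ((m*x) % n) := Finset.sum_congr rfl h
    _ = ∑ r ∈ Finset.range n, f r := step2' hn hcop f
    _ = max 0 ((n:ℤ)*b - m*a) := step3' hn a b

lemma sum_g (hn : 0 < n) (a b : ℤ) (R : ℕ) :
    ∑ x ∈ Finset.range (R*n), max 0 (b + Aq m n x - Aq m n (↑x + a)) = R * Pp m n a b := by
  induction R with
  | zero => simp
  | succ R ih =>
    have hrn : (R+1)*n = R*n + n := by ring
    rw [hrn, Finset.sum_range_add, ih]
    have h : ∀ x ∈ Finset.range n, max 0 (b + Aq m n ↑(R*n + x) - Aq m n (↑(R*n + x) + a))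
        = max 0 (b + Aq m n x - Aq m n (↑x + a)) := by
      intro x hx
      have h1 : ((R*n + x : ℕ) : ℤ) = (x:ℤ) + (R:ℤ) * n := by push_cast; ring
      rw [h1, show (x:ℤ) + (R:ℤ)*n + a = ((x:ℤ) + a) + (R:ℤ) * n by ring,
        A_add_mul hn _ (R:ℤ), A_add_mul hn _ (R:ℤ)]
      congr 1
      ring
    rw [Finset.sum_congr rfl h]
    have h2 : ∑ x ∈ Finset.range n, max 0 (b + Aq m n ↑x - Aq m n (↑x + a)) = Pp m n a b := rfl
    rw [h2]
    push_cast
    ring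

lemma g_le (hn : 0 < n) (hmn : m ≤ n) (a b x : ℤ) :
    max 0 (b + Aq m n x - Aq m n (x + a)) ≤ max 0 (b + |a| + 1) := by
  have h := A_diff_le hn hmn x (x + a)
  have h2 : |x - (x+a)| = |a| := by rw [show x - (x+a) = -a by ring, abs_neg]
  rw [h2] at h
  have := le_abs_self (Aq m n x - Aq m n (x + a))
  apply max_le_max le_rfl
  omega

lemma Np_nonneg (R : ℕ) (a b : ℤ) : 0 ≤ Np m n R a b := by
  apply Finset.sum_nonneg
  intro x hx
  split
  · exact le_max_left _ _
  · rfl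

lemma Np_le (hn : 0 < n) (R : ℕ) (a b : ℤ) : Np m n R a b ≤ R * Pp m n a b := by
  rw [← sum_g hn a b R]
  apply Finset.sum_le_sum
  intro x hx
  split
  · rfl
  · exact le_max_left _ _

lemma Np_bound (hn : 0 < n) (hmn : m ≤ n) (R : ℕ) (a b : ℤ) :
    (R:ℤ) * Pp m n a b - Np m n R a b ≤ 2 * |a| * max 0 (b + |a| + 1) := by
  set M : ℤ := max 0 (b + |a| + 1) with hM
  have hM0 : 0 ≤ M := le_max_left _ _
  have hdiff : (R:ℤ) * Pp m n a b - Np m n R a b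
      = ∑ x ∈ Finset.range (R*n),
          (if ¬ (0 ≤ (x:ℤ) + a ∧ (x:ℤ) + a < (R*n : ℕ)) then max 0 (b + Aq m n x - Aq m n (↑x + a)) else 0) := by
    rw [← sum_g hn a b R]
    unfold Np
    rw [← Finset.sum_sub_distrib]
    apply Finset.sum_congr rfl
    intro x hx
    by_cases hc : 0 ≤ (x:ℤ) + a ∧ (x:ℤ) + a < ((R*n : ℕ) : ℤ)
    · rw [if_pos hc, if_neg (not_not_intro hc)]; ring
    · rw [if_neg hc, if_pos hc]; ring
  rw [hdiff]
  have hle : ∑ x ∈ Finset.range (R*n),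
      (if ¬ (0 ≤ (x:ℤ) + a ∧ (x:ℤ) + a < (R*n : ℕ)) then max 0 (b + Aq m n x - Aq m n (↑x + a)) else 0)
      ≤ ∑ x ∈ Finset.range (R*n),
      (if ¬ (0 ≤ (x:ℤ) + a ∧ (x:ℤ) + a < (R*n : ℕ)) then M else 0) := by
    apply Finset.sum_le_sum
    intro x hx
    split
    · exact g_le hn hmn a b x
    · rfl
  refine le_trans hle ?_
  rw [← Finset.sum_filter, Finset.sum_const]
  set a' : ℕ := a.natAbs with ha'
  have hsub : Finset.filter (fun x : ℕ => ¬ (0 ≤ (x:ℤ) + a ∧ (x:ℤ) + a < (R*n : ℕ))) (Finset.range (R*n))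
      ⊆ Finset.range a' ∪ Finset.Ico (R*n - a') (R*n) := by
    intro x hx
    simp only [Finset.mem_filter, Finset.mem_range, not_and, not_lt, Finset.mem_union,
      Finset.mem_Ico] at hx ⊢
    omega
  have hcard : (Finset.filter (fun x : ℕ => ¬ (0 ≤ (x:ℤ) + a ∧ (x:ℤ) + a < (R*n : ℕ))) (Finset.range (R*n))).card
      ≤ 2 * a' := by
    refine le_trans (Finset.card_le_card hsub) ?_
    refine le_trans (Finset.card_union_le _ _) ?_
    rw [Finset.card_range, Nat.card_Ico]
    omega
  rw [nsmul_eq_mul]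
  have h2a : (2:ℤ) * |a| = ((2 * a' : ℕ) : ℤ) := by
    rw [ha', Int.abs_eq_natAbs]; push_cast; ring
  rw [h2a]
  apply mul_le_mul_of_nonneg_right _ hM0
  exact_mod_cast hcard

lemma wsum (hF : Summable fun v : ℤ × ℤ =>
      F v * (Real.sqrt ((v.1 : ℝ) ^ 2 + (v.2 : ℝ) ^ 2) + 1)) (a : ℤ) :
    Summable fun b : ℤ => F (a, b) * (Real.sqrt ((a:ℝ)^2 + (b:ℝ)^2) + 1) :=
  hF.comp_injective (fun b c h => by simpa using h : Function.Injective fun b : ℤ => (a, b))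

lemma sqrt_ge_abs2 (a b : ℤ) : |(b:ℝ)| ≤ Real.sqrt ((a:ℝ)^2 + (b:ℝ)^2) := by
  rw [← Real.sqrt_sq_eq_abs]
  exact Real.sqrt_le_sqrt (by nlinarith [sq_nonneg ((a:ℝ))])

lemma sqrt_ge_abs1 (a b : ℤ) : |(a:ℝ)| ≤ Real.sqrt ((a:ℝ)^2 + (b:ℝ)^2) := by
  rw [← Real.sqrt_sq_eq_abs]
  exact Real.sqrt_le_sqrt (by nlinarith [sq_nonneg ((b:ℝ))])

lemma summable_w (hF0 : ∀ v, 0 ≤ F v)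
    (hF : Summable fun v : ℤ × ℤ =>
      F v * (Real.sqrt ((v.1 : ℝ) ^ 2 + (v.2 : ℝ) ^ 2) + 1))
    (a : ℤ) (w : ℤ → ℝ) (hw0 : ∀ b, 0 ≤ w b)
    (hw : ∀ b, w b ≤ |(b:ℝ)| + |(a:ℝ)| + 2) :
    Summable fun b : ℤ => F (a, b) * w b := by
  refine Summable.of_nonneg_of_le (fun b => mul_nonneg (hF0 _) (hw0 b))
    (fun b => ?_)
    ((wsum hF a).mul_left (2 * (|(a:ℝ)| + 1)))
  have h1 : w b ≤ (2 * (|(a:ℝ)| + 1)) * (Real.sqrt ((a:ℝ)^2 + (b:ℝ)^2) + 1) := by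
    have h2 := sqrt_ge_abs2 a b
    have h3 := Real.sqrt_nonneg ((a:ℝ)^2 + (b:ℝ)^2)
    have h4 := abs_nonneg ((a:ℝ))
    nlinarith [hw b]
  calc F (a,b) * w b ≤ F (a,b) * ((2 * (|(a:ℝ)| + 1)) * (Real.sqrt ((a:ℝ)^2 + (b:ℝ)^2) + 1)) :=
        mul_le_mul_of_nonneg_left h1 (hF0 _)
    _ = (2 * (|(a:ℝ)| + 1)) * (F (a,b) * (Real.sqrt ((a:ℝ)^2 + (b:ℝ)^2) + 1)) := by ring

lemma toNat_cast_le (a b A B : ℤ) (hAB : |B - A| ≤ |a| + 1) :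
    (((b + B - A).toNat : ℕ) : ℝ) ≤ |(b:ℝ)| + |(a:ℝ)| + 2 := by
  have htri : |b + B - A| ≤ |b| + |B - A| := by
    have h := abs_add_le b (B - A)
    have h2 : b + (B - A) = b + B - A := by ring
    rwa [h2] at h
  have hZ : (((b + B - A).toNat : ℕ) : ℤ) ≤ |b| + |a| + 2 := by
    rw [Int.toNat_eq_max]
    have h3 : max (b + B - A) 0 ≤ |b + B - A| := max_le (le_abs_self _) (abs_nonneg _)
    linarith
  have : ((((b + B - A).toNat : ℕ) : ℤ) : ℝ) ≤ ((|b| + |a| + 2 : ℤ) : ℝ) := by exact_mod_cast hZ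
  rw [Int.cast_add, Int.cast_add, Int.cast_abs, Int.cast_abs] at this
  exact_mod_cast this

lemma summableF (hF0 : ∀ v, 0 ≤ F v)
    (hF : Summable fun v : ℤ × ℤ =>
      F v * (Real.sqrt ((v.1 : ℝ) ^ 2 + (v.2 : ℝ) ^ 2) + 1)) : Summable F := by
  refine Summable.of_nonneg_of_le hF0 (fun v => ?_) hF
  have h1 : (1:ℝ) ≤ Real.sqrt ((v.1:ℝ)^2 + (v.2:ℝ)^2) + 1 := by
    have := Real.sqrt_nonneg ((v.1:ℝ)^2 + (v.2:ℝ)^2); linarith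
  nlinarith [hF0 v]

lemma inner_eq (hF0 : ∀ v, 0 ≤ F v)
    (hF : Summable fun v : ℤ × ℤ =>
      F v * (Real.sqrt ((v.1 : ℝ) ^ 2 + (v.2 : ℝ) ^ 2) + 1))
    (a A B : ℤ) (hAB : |B - A| ≤ |a| + 1) :
    ∑' y₁ : ℤ, ∑' y₂ : ℤ, (if A < y₁ ∧ y₂ ≤ B then F (a, y₁ - y₂) else 0)
    = ∑' b : ℤ, F (a, b) * (((b + B - A).toNat : ℕ) : ℝ) := by
  have hsum_b : Summable fun b : ℤ => F (a, b) * (((b + B - A).toNat : ℕ) : ℝ) :=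
    summable_w hF0 hF a _ (fun b => by positivity) (fun b => toNat_cast_le a b A B hAB)
  set h : ℤ × ℤ → ℝ := fun p => if A < p.2 ∧ p.2 ≤ B + p.1 then F (a, p.1) else 0 with hh
  have hslice0 : ∀ b : ℤ, ∀ y₁ ∉ Finset.Ioc A (B + b), h (b, y₁) = 0 := by
    intro b y₁ hy₁
    rw [Finset.mem_Ioc] at hy₁
    rw [hh]
    simp only
    rw [if_neg]
    tauto
  have hslice : ∀ b : ℤ, ∑' y₁ : ℤ, h (b, y₁) = F (a, b) * (((b + B - A).toNat : ℕ) : ℝ) := by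
    intro b
    rw [tsum_eq_sum (hslice0 b)]
    have : ∀ y₁ ∈ Finset.Ioc A (B + b), h (b, y₁) = F (a, b) := by
      intro y₁ hy₁
      rw [Finset.mem_Ioc] at hy₁
      rw [hh]; simp only; rw [if_pos hy₁]
    rw [Finset.sum_congr rfl this, Finset.sum_const, Int.card_Ioc, nsmul_eq_mul, mul_comm]
    congr 2
    omega
  have hsummable : Summable h := by
    rw [summable_prod_of_nonneg (by
      intro p
      rw [hh]; simp only
      split
      · exact hF0 _
      · rfl)]
    constructor
    · exact fun b => summable_of_ne_finset_zero (hslice0 b)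
    · apply Summable.congr hsum_b
      intro b
      exact (hslice b).symm
  have step_a : ∀ y₁ : ℤ, ∑' y₂ : ℤ, (if A < y₁ ∧ y₂ ≤ B then F (a, y₁ - y₂) else 0)
      = ∑' b : ℤ, h (b, y₁) := by
    intro y₁
    rw [← Equiv.tsum_eq (Equiv.subLeft y₁)
      (fun y₂ => if A < y₁ ∧ y₂ ≤ B then F (a, y₁ - y₂) else 0)]
    apply tsum_congr
    intro b
    rw [hh]
    simp only [Equiv.subLeft_apply, sub_sub_cancel]
    congr 1
    simp [sub_le_iff_le_add]
  calc ∑' y₁ : ℤ, ∑' y₂ : ℤ, (if A < y₁ ∧ y₂ ≤ B then F (a, y₁ - y₂) else 0)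
      = ∑' y₁ : ℤ, ∑' b : ℤ, h (b, y₁) := tsum_congr step_a
    _ = ∑' p : ℤ × ℤ, h p.swap := by
        refine (Summable.tsum_prod' hsummable.prod_symm (fun y₁ => ?_)).symm
        refine Summable.of_nonneg_of_le (fun b => ?_) (fun b => ?_)
          ((summableF hF0 hF).comp_injective
            (fun b c hbc => by simpa using hbc : Function.Injective fun b : ℤ => (a, b)))
        · rw [hh]; simp only; split
          · exact hF0 _
          · rfl
        · rw [hh]; simp only; split
          · simp only [Function.comp]; exact le_rfl
          · exact hF0 _
    _ = ∑' p : ℤ × ℤ, h p := by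
        rw [← (Equiv.prodComm ℤ ℤ).tsum_eq h]
        rfl
    _ = ∑' b : ℤ, ∑' y₁ : ℤ, h (b, y₁) := Summable.tsum_prod' hsummable
          (fun b => summable_of_ne_finset_zero (hslice0 b))
    _ = ∑' b : ℤ, F (a, b) * (((b + B - A).toNat : ℕ) : ℝ) := tsum_congr hslice
lemma max_cast_le (a b : ℤ) : ((max 0 (b + |a| + 1) : ℤ) : ℝ) ≤ |(b:ℝ)| + |(a:ℝ)| + 2 := by
  have h : (max 0 (b + |a| + 1) : ℤ) ≤ |b| + |a| + 2 := by
    have := le_abs_self b; have := abs_nonneg a; have := abs_nonneg b; omega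
  calc ((max 0 (b + |a| + 1) : ℤ) : ℝ) ≤ ((|b| + |a| + 2 : ℤ) : ℝ) := by exact_mod_cast h
    _ = |(b:ℝ)| + |(a:ℝ)| + 2 := by push_cast; ring

/-- the inner weight for fixed a, x -/
lemma w_le (hn : 0 < n) (hmn : m ≤ n) (R : ℕ) (a b : ℤ) (x : ℕ) :
    ((if 0 ≤ (x:ℤ) + a ∧ (x:ℤ) + a < (R*n : ℕ) then max 0 (b + Aq m n x - Aq m n (x + a)) else 0 : ℤ) : ℝ)
      ≤ |(b:ℝ)| + |(a:ℝ)| + 2 := by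
  refine le_trans ?_ (max_cast_le a b)
  have : (if 0 ≤ (x:ℤ) + a ∧ (x:ℤ) + a < (R*n : ℕ) then max 0 (b + Aq m n x - Aq m n (x + a)) else 0 : ℤ)
      ≤ max 0 (b + |a| + 1) := by
    split
    · exact g_le hn hmn a b x
    · exact le_max_left _ _
  exact_mod_cast this

lemma Np_le' (hn : 0 < n) (hmn : m ≤ n) (R : ℕ) (a b : ℤ) :
    (Np m n R a b : ℝ) ≤ (R*n : ℕ) * (|(b:ℝ)| + |(a:ℝ)| + 2) := by
  have h : (Np m n R a b : ℝ) ≤ ∑ _x ∈ Finset.range (R*n), (|(b:ℝ)| + |(a:ℝ)| + 2) := by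
    unfold Np
    push_cast
    apply Finset.sum_le_sum
    intro x hx
    have := w_le hn hmn R a b x
    rw [apply_ite (fun z : ℤ => (z : ℝ))] at this
    push_cast at this ⊢
    exact this
  refine le_trans h ?_
  rw [Finset.sum_const, Finset.card_range, nsmul_eq_mul]

lemma summable_FNp (hn : 0 < n) (hmn : m ≤ n) (hF0 : ∀ v, 0 ≤ F v)
    (hF : Summable fun v : ℤ × ℤ =>
      F v * (Real.sqrt ((v.1 : ℝ) ^ 2 + (v.2 : ℝ) ^ 2) + 1)) (R : ℕ) :
    Summable fun v : ℤ × ℤ => F v * ((Np m n R v.1 v.2 : ℤ) : ℝ) := by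
  have hs := hF.mul_left (((R*n : ℕ) : ℝ) * 2)
  refine Summable.of_nonneg_of_le
    (fun v => mul_nonneg (hF0 v) (Int.cast_nonneg_iff.mpr (Np_nonneg R v.1 v.2)))
    (fun v => ?_) hs
  have h1 : ((Np m n R v.1 v.2 : ℤ) : ℝ) ≤ (R*n : ℕ) * (2 * (Real.sqrt ((v.1:ℝ)^2 + (v.2:ℝ)^2) + 1)) := by
    refine le_trans (Np_le' hn hmn R v.1 v.2) ?_
    have h2 := sqrt_ge_abs1 v.1 v.2
    have h3 := sqrt_ge_abs2 v.1 v.2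
    have h4 : (0:ℝ) ≤ (R*n : ℕ) := by positivity
    nlinarith [Real.sqrt_nonneg ((v.1:ℝ)^2 + (v.2:ℝ)^2)]
  calc F v * ((Np m n R v.1 v.2 : ℤ) : ℝ)
      ≤ F v * ((R*n : ℕ) * (2 * (Real.sqrt ((v.1:ℝ)^2 + (v.2:ℝ)^2) + 1))) :=
        mul_le_mul_of_nonneg_left h1 (hF0 v)
    _ = ((R*n : ℕ) : ℝ) * 2 * (F v * (Real.sqrt ((v.1:ℝ)^2 + (v.2:ℝ)^2) + 1)) := by ring

lemma regroup (hn : 0 < n) (hmn : m ≤ n) (hF0 : ∀ v, 0 ≤ F v)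
    (hF : Summable fun v : ℤ × ℤ =>
      F v * (Real.sqrt ((v.1 : ℝ) ^ 2 + (v.2 : ℝ) ^ 2) + 1)) (R : ℕ) :
    ∑ x₁ ∈ Finset.range (R*n), ∑ x₂ ∈ Finset.range (R*n),
      ∑' b : ℤ, F ((x₁:ℤ) - (x₂:ℤ), b) * ((max 0 (b + Aq m n x₂ - Aq m n x₁) : ℤ) : ℝ)
    = ∑' v : ℤ × ℤ, F v * ((Np m n R v.1 v.2 : ℤ) : ℝ) := by
  classical
  -- the summand families
  set w : ℤ → ℕ → ℤ → ℝ := fun a x b =>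
    F (a, b) * ((if 0 ≤ (x:ℤ) + a ∧ (x:ℤ) + a < (R*n : ℕ)
      then max 0 (b + Aq m n x - Aq m n ((x:ℤ) + a)) else 0 : ℤ) : ℝ) with hw
  have hwsummable : ∀ (a : ℤ) (x : ℕ), Summable (w a x) := by
    intro a x
    apply summable_w hF0 hF a
    · intro b
      have : (0:ℤ) ≤ (if 0 ≤ (x:ℤ) + a ∧ (x:ℤ) + a < (R*n : ℕ)
          then max 0 (b + Aq m n x - Aq m n ((x:ℤ) + a)) else 0 : ℤ) := by
        split
        · exact le_max_left _ _
        · rfl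
      exact_mod_cast this
    · intro b
      exact w_le hn hmn R a b x
  -- Step: for each a, `∑' b, F(a,b) * Np = ∑_{x} ∑' b, w a x b`
  have step3 : ∀ a : ℤ, ∑' b : ℤ, F (a, b) * ((Np m n R a b : ℤ) : ℝ)
      = ∑ x ∈ Finset.range (R*n), ∑' b : ℤ, w a x b := by
    intro a
    rw [← Summable.tsum_finsetSum (fun x _ => hwsummable a x)]
    apply tsum_congr
    intro b
    rw [hw]
    simp only
    rw [← Finset.mul_sum]
    congr 1
    unfold Np
    push_cast
    rfl
  -- summability in `a` of the pieces, for each x: finite support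
  have hfinsupp : ∀ x ∈ Finset.range (R*n), ∀ a : ℤ,
      a ∉ Finset.Icc (-(x:ℤ)) ((R*n : ℕ) - (x:ℤ) - 1) → ∑' b : ℤ, w a x b = 0 := by
    intro x hx a ha
    rw [Finset.mem_Icc] at ha
    have hcond : ¬ (0 ≤ (x:ℤ) + a ∧ (x:ℤ) + a < (R*n : ℕ)) := by omega
    have : ∀ b : ℤ, w a x b = 0 := by
      intro b
      rw [hw]; simp only
      rw [if_neg hcond]
      simp
    simp [this]
  -- swap ∑'_a with ∑_x
  have step4 : ∑' a : ℤ, ∑ x ∈ Finset.range (R*n), ∑' b : ℤ, w a x b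
      = ∑ x ∈ Finset.range (R*n), ∑' a : ℤ, ∑' b : ℤ, w a x b := by
    apply Summable.tsum_finsetSum
    intro x hx
    exact summable_of_ne_finset_zero (hfinsupp x hx)
  -- per x: reindex a := x₁ - x
  have step5 : ∀ x ∈ Finset.range (R*n), ∑' a : ℤ, ∑' b : ℤ, w a x b
      = ∑ x₁ ∈ Finset.range (R*n), ∑' b : ℤ,
          F ((x₁:ℤ) - (x:ℤ), b) * ((max 0 (b + Aq m n x - Aq m n x₁) : ℤ) : ℝ) := by
    intro x hx
    rw [← Equiv.tsum_eq (Equiv.subRight (x:ℤ)) (fun a => ∑' b : ℤ, w a x b)]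
    have hout : ∀ x₁ : ℤ, x₁ ∉ (Finset.range (R*n)).map ⟨((↑) : ℕ → ℤ), Nat.cast_injective⟩ →
        ∑' b : ℤ, w ((Equiv.subRight (x:ℤ)) x₁) x b = 0 := by
      intro x₁ hx₁
      simp only [Finset.mem_map, Finset.mem_range, Function.Embedding.coeFn_mk] at hx₁
      have hcond : ¬ (0 ≤ (x:ℤ) + (x₁ - x) ∧ (x:ℤ) + (x₁ - x) < (R*n : ℕ)) := by
        intro hc
        obtain ⟨h1, h2⟩ := hc
        rw [show (x:ℤ) + (x₁ - x) = x₁ by ring] at h1 h2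
        exact hx₁ ⟨x₁.toNat, by omega, by omega⟩
      have hzero : ∀ b : ℤ, w (x₁ - (x:ℤ)) x b = 0 := by
        intro b
        rw [hw]; simp only
        rw [if_neg hcond]
        simp
      simp only [Equiv.subRight_apply]
      simp [hzero]
    rw [tsum_eq_sum hout, Finset.sum_map]
    apply Finset.sum_congr rfl
    intro x₁ hx₁
    rw [Finset.mem_range] at hx₁
    apply tsum_congr
    intro b
    rw [hw]
    simp only [Equiv.subRight_apply, Function.Embedding.coeFn_mk]
    have hcond : 0 ≤ (x:ℤ) + ((x₁:ℤ) - x) ∧ (x:ℤ) + ((x₁:ℤ) - x) < (R*n : ℕ) := by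
      refine ⟨by omega, by omega⟩
    rw [if_pos hcond, show (x:ℤ) + ((x₁:ℤ) - x) = (x₁:ℤ) by ring]
  -- assemble
  have hNv := summable_FNp hn hmn hF0 hF R
  rw [Summable.tsum_prod' hNv (fun a => hNv.prod_factor a)]
  refine Eq.symm ?_
  calc ∑' a : ℤ, ∑' b : ℤ, F (a, b) * ((Np m n R a b : ℤ) : ℝ)
      = ∑' a : ℤ, ∑ x ∈ Finset.range (R*n), ∑' b : ℤ, w a x b := tsum_congr step3
    _ = ∑ x ∈ Finset.range (R*n), ∑' a : ℤ, ∑' b : ℤ, w a x b := step4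
    _ = ∑ x ∈ Finset.range (R*n), ∑ x₁ ∈ Finset.range (R*n), ∑' b : ℤ,
          F ((x₁:ℤ) - (x:ℤ), b) * ((max 0 (b + Aq m n x - Aq m n x₁) : ℤ) : ℝ) :=
        Finset.sum_congr rfl step5
    _ = ∑ x₁ ∈ Finset.range (R*n), ∑ x₂ ∈ Finset.range (R*n), ∑' b : ℤ,
          F ((x₁:ℤ) - (x₂:ℤ), b) * ((max 0 (b + Aq m n x₂ - Aq m n x₁) : ℤ) : ℝ) :=
        Finset.sum_comm


end Lemmas

/-- vertical strip case of the asymptotic boundary form: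
the normalized sums converge to
`√(n²+m²) · Σ_{(x,y)∈ℤ², y > (m/n)x} dist((x,y),G)·F(x,y)`. -/
theorem vertical_strip_boundary_form
    (m n : ℕ) (hn : 0 < n) (hmn : m ≤ n) (hcop : Nat.Coprime m n)
    (F : ℤ × ℤ → ℝ) (hF0 : ∀ v, 0 ≤ F v)
    (hF : Summable fun v : ℤ × ℤ =>
      F v * (Real.sqrt ((v.1 : ℝ) ^ 2 + (v.2 : ℝ) ^ 2) + 1)) :
    Tendsto
      (fun R : ℕ =>
        (1 / (R : ℝ)) *
          ∑ x₁ ∈ Finset.range (R * n), ∑ x₂ ∈ Finset.range (R * n),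
            ∑' y₁ : ℤ, ∑' y₂ : ℤ,
              if (m : ℝ) / n * (x₁ : ℝ) < (y₁ : ℝ) ∧ (y₂ : ℝ) ≤ (m : ℝ) / n * (x₂ : ℝ)
              then F ((x₁ : ℤ) - (x₂ : ℤ), y₁ - y₂) else 0)
      atTop
      (𝓝 (Real.sqrt ((n : ℝ) ^ 2 + (m : ℝ) ^ 2) *
        ∑' p : ℤ × ℤ,
          if (m : ℝ) / n * (p.1 : ℝ) < (p.2 : ℝ) then distToGraph m n p * F p else 0)) := by
  have hn' : (0:ℝ) < n := by exact_mod_cast hn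
  have hK : (0:ℝ) < Real.sqrt ((n:ℝ)^2 + (m:ℝ)^2) := Real.sqrt_pos.2 (by positivity)
  -- Step 1: rewrite the LHS function
  have hLHS : ∀ R : ℕ,
      (1 / (R : ℝ)) *
          ∑ x₁ ∈ Finset.range (R * n), ∑ x₂ ∈ Finset.range (R * n),
            ∑' y₁ : ℤ, ∑' y₂ : ℤ,
              (if (m : ℝ) / n * (x₁ : ℝ) < (y₁ : ℝ) ∧ (y₂ : ℝ) ≤ (m : ℝ) / n * (x₂ : ℝ)
              then F ((x₁ : ℤ) - (x₂ : ℤ), y₁ - y₂) else 0)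
      = ∑' v : ℤ × ℤ, (1 / (R : ℝ)) * (F v * ((Np m n R v.1 v.2 : ℤ) : ℝ)) := by
    intro R
    rw [tsum_mul_left]
    congr 1
    rw [← regroup hn hmn hF0 hF R]
    apply Finset.sum_congr rfl
    intro x₁ _
    apply Finset.sum_congr rfl
    intro x₂ _
    have hcond : ∀ y₁ y₂ : ℤ,
        ((m : ℝ) / n * (x₁ : ℝ) < (y₁ : ℝ) ∧ (y₂ : ℝ) ≤ (m : ℝ) / n * (x₂ : ℝ))
        ↔ (Aq m n x₁ < y₁ ∧ y₂ ≤ Aq m n x₂) := by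
      intro y₁ y₂
      rw [show ((x₁:ℕ):ℝ) = (((x₁:ℤ)):ℝ) by push_cast; rfl,
        show ((x₂:ℕ):ℝ) = (((x₂:ℤ)):ℝ) by push_cast; rfl,
        ← floorA (m := m) (n := n) ((x₁:ℕ) : ℤ), ← floorA (m := m) (n := n) ((x₂:ℕ) : ℤ), Int.floor_lt, Int.le_floor]
    have h1 : ∑' y₁ : ℤ, ∑' y₂ : ℤ,
        (if (m : ℝ) / n * (x₁ : ℝ) < (y₁ : ℝ) ∧ (y₂ : ℝ) ≤ (m : ℝ) / n * (x₂ : ℝ)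
              then F ((x₁ : ℤ) - (x₂ : ℤ), y₁ - y₂) else 0)
        = ∑' y₁ : ℤ, ∑' y₂ : ℤ,
        (if Aq m n x₁ < y₁ ∧ y₂ ≤ Aq m n x₂ then F ((x₁ : ℤ) - (x₂ : ℤ), y₁ - y₂) else 0) := by
      apply tsum_congr; intro y₁; apply tsum_congr; intro y₂
      exact if_congr (hcond y₁ y₂) rfl rfl
    rw [h1, inner_eq hF0 hF ((x₁:ℤ) - (x₂:ℤ)) (Aq m n x₁) (Aq m n x₂)
      (by rw [abs_sub_comm ((x₁:ℤ)) ((x₂:ℤ))] at *; exact A_diff_le hn hmn x₂ x₁)]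
    apply tsum_congr
    intro b
    have hz : ((b + Aq m n x₂ - Aq m n x₁).toNat : ℤ) = max 0 (b + Aq m n x₂ - Aq m n x₁) := by
      rw [Int.toNat_eq_max, max_comm]
    have hzr : (((b + Aq m n x₂ - Aq m n x₁).toNat : ℕ) : ℝ)
        = ((max 0 (b + Aq m n x₂ - Aq m n x₁) : ℤ) : ℝ) := by exact_mod_cast hz
    rw [hzr]
  -- limit function
  set g : ℤ × ℤ → ℝ := fun v => F v * ((max 0 ((n:ℤ) * v.2 - m * v.1) : ℤ) : ℝ) with hg
  -- pointwise convergence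
  have hpt : ∀ v : ℤ × ℤ,
      Tendsto (fun R : ℕ => (1 / (R : ℝ)) * (F v * ((Np m n R v.1 v.2 : ℤ) : ℝ)))
      atTop (𝓝 (g v)) := by
    rintro ⟨a, b⟩
    set K : ℝ := ((2 * |a| * max 0 (b + |a| + 1) : ℤ) : ℝ) with hKdef
    have habs : ∀ R : ℕ, |((Np m n R a b : ℤ) : ℝ) - (R:ℝ) * ((Pp m n a b : ℤ) : ℝ)| ≤ K := by
      intro R
      have h1 := Np_le (m := m) hn R a b
      have h2 := Np_bound hn hmn R a b
      have hz : |(Np m n R a b : ℤ) - (R:ℤ) * Pp m n a b| ≤ 2 * |a| * max 0 (b + |a| + 1) := by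
        rw [abs_of_nonpos (by omega : (Np m n R a b : ℤ) - (R:ℤ) * Pp m n a b ≤ 0)]
        omega
      calc |((Np m n R a b : ℤ) : ℝ) - (R:ℝ) * ((Pp m n a b : ℤ) : ℝ)|
          = ((|(Np m n R a b : ℤ) - (R:ℤ) * Pp m n a b| : ℤ) : ℝ) := by push_cast; ring_nf
        _ ≤ K := by rw [hKdef]; exact_mod_cast hz
    have hdiff : Tendsto
        (fun R : ℕ => ((Np m n R a b : ℤ) : ℝ) / R - ((Pp m n a b : ℤ) : ℝ)) atTop (𝓝 0) := by
      apply squeeze_zero_norm' (a := fun R : ℕ => K / R)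
      · filter_upwards [eventually_ge_atTop 1] with R hR
        have hR' : (0:ℝ) < (R:ℝ) := by exact_mod_cast hR
        have h1 : ((Np m n R a b : ℤ) : ℝ) / R - ((Pp m n a b : ℤ) : ℝ)
            = (((Np m n R a b : ℤ) : ℝ) - (R:ℝ) * ((Pp m n a b : ℤ) : ℝ)) / R := by
          field_simp
        rw [h1, norm_div, Real.norm_natCast, Real.norm_eq_abs,
          div_le_div_iff_of_pos_right hR']
        exact habs R
      · exact tendsto_const_div_atTop_nhds_zero_nat K
    have hNlim : Tendsto (fun R : ℕ => ((Np m n R a b : ℤ) : ℝ) / R) atTop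
        (𝓝 ((Pp m n a b : ℤ) : ℝ)) := by
      have h := hdiff.add_const ((Pp m n a b : ℤ) : ℝ)
      rw [zero_add] at h
      apply h.congr
      intro R
      ring
    have hmul := hNlim.const_mul (F (a, b))
    have hfinal : Tendsto (fun R : ℕ => (1 / (R : ℝ)) * (F (a,b) * ((Np m n R a b : ℤ) : ℝ)))
        atTop (𝓝 (F (a,b) * ((Pp m n a b : ℤ) : ℝ))) := by
      apply hmul.congr
      intro R
      ring
    have hgval : F (a,b) * ((Pp m n a b : ℤ) : ℝ) = g (a, b) := by
      rw [hg]; simp only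
      rw [periodP hn hcop a b]
    rw [← hgval]
    exact hfinal
  -- uniform bound
  have hbound : ∀ᶠ R : ℕ in atTop, ∀ v : ℤ × ℤ,
      ‖(1 / (R : ℝ)) * (F v * ((Np m n R v.1 v.2 : ℤ) : ℝ))‖
        ≤ (2 * n) * (F v * (Real.sqrt ((v.1 : ℝ) ^ 2 + (v.2 : ℝ) ^ 2) + 1)) := by
    filter_upwards [eventually_ge_atTop 1] with R hR
    intro v
    have hR' : (0:ℝ) < (R:ℝ) := by exact_mod_cast hR
    have hNp0 : (0:ℝ) ≤ ((Np m n R v.1 v.2 : ℤ) : ℝ) :=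
      Int.cast_nonneg_iff.mpr (Np_nonneg R v.1 v.2)
    have hnn : (0:ℝ) ≤ (1 / (R : ℝ)) * (F v * ((Np m n R v.1 v.2 : ℤ) : ℝ)) :=
      mul_nonneg (by positivity) (mul_nonneg (hF0 v) hNp0)
    rw [Real.norm_eq_abs, abs_of_nonneg hnn]
    have h1 : ((Np m n R v.1 v.2 : ℤ) : ℝ)
        ≤ (R:ℝ) * n * (2 * (Real.sqrt ((v.1 : ℝ) ^ 2 + (v.2 : ℝ) ^ 2) + 1)) := by
      refine le_trans (Np_le' hn hmn R v.1 v.2) ?_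
      have h2 := sqrt_ge_abs1 v.1 v.2
      have h3 := sqrt_ge_abs2 v.1 v.2
      have h4 : (0:ℝ) < (R:ℝ) * n := by positivity
      have h5 : ((R*n : ℕ) : ℝ) = (R:ℝ) * n := by push_cast; ring
      rw [h5]
      nlinarith [Real.sqrt_nonneg ((v.1:ℝ)^2 + (v.2:ℝ)^2)]
    calc (1 / (R : ℝ)) * (F v * ((Np m n R v.1 v.2 : ℤ) : ℝ))
        ≤ (1 / (R : ℝ)) * (F v * ((R:ℝ) * n * (2 * (Real.sqrt ((v.1 : ℝ) ^ 2 + (v.2 : ℝ) ^ 2) + 1)))) := by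
          apply mul_le_mul_of_nonneg_left (mul_le_mul_of_nonneg_left h1 (hF0 v))
          positivity
      _ = (2 * n) * (F v * (Real.sqrt ((v.1 : ℝ) ^ 2 + (v.2 : ℝ) ^ 2) + 1)) := by
          field_simp
  -- identifying the limit
  have hRHS : Real.sqrt ((n : ℝ) ^ 2 + (m : ℝ) ^ 2) *
        ∑' p : ℤ × ℤ,
          (if (m : ℝ) / n * (p.1 : ℝ) < (p.2 : ℝ) then distToGraph m n p * F p else 0)
      = ∑' v : ℤ × ℤ, g v := by
    rw [← tsum_mul_left]
    apply tsum_congr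
    intro p
    have hiff : ((m : ℝ) / n * (p.1 : ℝ) < (p.2 : ℝ)) ↔ ((m:ℤ) * p.1 < (n:ℤ) * p.2) := by
      rw [div_mul_eq_mul_div, div_lt_iff₀ hn']
      constructor
      · intro h
        have : ((m:ℤ) * p.1 : ℝ) < (((n:ℤ) * p.2 : ℤ) : ℝ) := by push_cast; push_cast at h; linarith
        exact_mod_cast this
      · intro h
        have : ((m:ℤ) * p.1 : ℝ) < (((n:ℤ) * p.2 : ℤ) : ℝ) := by exact_mod_cast h
        push_cast at this ⊢; linarith
    by_cases hc : (m:ℤ) * p.1 < (n:ℤ) * p.2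
    · rw [if_pos (hiff.mpr hc), distToGraph_eq hn p, hg]
      simp only
      rw [max_eq_right (by omega : (0:ℤ) ≤ (n:ℤ) * p.2 - m * p.1),
        abs_of_nonneg (by omega : (0:ℤ) ≤ (n:ℤ) * p.2 - m * p.1)]
      field_simp
    · rw [if_neg (fun h => hc (hiff.mp h)), hg]
      simp only
      rw [max_eq_left (by omega : ((n:ℤ) * p.2 - m * p.1) ≤ 0)]
      simp
  rw [show (fun R : ℕ =>
        (1 / (R : ℝ)) *
          ∑ x₁ ∈ Finset.range (R * n), ∑ x₂ ∈ Finset.range (R * n),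
            ∑' y₁ : ℤ, ∑' y₂ : ℤ,
              if (m : ℝ) / n * (x₁ : ℝ) < (y₁ : ℝ) ∧ (y₂ : ℝ) ≤ (m : ℝ) / n * (x₂ : ℝ)
              then F ((x₁ : ℤ) - (x₂ : ℤ), y₁ - y₂) else 0)
      = (fun R : ℕ => ∑' v : ℤ × ℤ, (1 / (R : ℝ)) * (F v * ((Np m n R v.1 v.2 : ℤ) : ℝ)))
      from funext hLHS, hRHS]
  exact tendsto_tsum_of_dominated_convergence (hF.mul_left ((2:ℝ) * n)) hpt hbound
end
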